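/- For p ∈ 0⁺(S), the following are equivalent: (a) p ∈ K(0⁺(S)); (b) for every A ∈ p, the set {x ∈ S : −x+A ∈ p} is syndetic near zero; (c) for every r ∈ 0⁺(S) there exists q ∈ 0⁺(S) with p = q + r + p. -/

import Mathlib

open Set Filter

attribute [local instance] Ultrafilter.add

/-- `S` is a subsemigroup of `((0,∞),+)` which is dense in `(0,∞)`
    (with the usual topology of `ℝ`). -/
def DenseSubsemigroupPos (S : Set ℝ) : Prop :=
  (∀ x ∈ S, 0 < x) ∧ (∀ x ∈ S, ∀ y ∈ S, x + y ∈ S) ∧ Ioi (0 : ℝ) ⊆ closure S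

/-- `0⁺(S)`: the ultrafilters (on `S`, viewed as ultrafilters on `ℝ` containing `S`)
    all of whose members meet every interval `(0,ε)`. -/
def zeroPlus (S : Set ℝ) : Set (Ultrafilter ℝ) :=
  {p | ∀ ε > (0 : ℝ), Ioo (0 : ℝ) ε ∩ S ∈ p}

/-- `L` is a left ideal of the subsemigroup `T` of `βS_d`. -/
def IsLeftIdealIn (T L : Set (Ultrafilter ℝ)) : Prop :=
  L.Nonempty ∧ L ⊆ T ∧ ∀ p ∈ T, ∀ q ∈ L, p + q ∈ L

/-- `L` is a minimal left ideal of the subsemigroup `T` of `βS_d`. -/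
def IsMinimalLeftIdealIn (T L : Set (Ultrafilter ℝ)) : Prop :=
  IsLeftIdealIn T L ∧ ∀ L', IsLeftIdealIn T L' → L' ⊆ L → L' = L

/-- `K(T)`: the smallest two sided ideal of `T`, i.e. the union of all
    minimal left ideals of `T`. -/
def smallestIdeal (T : Set (Ultrafilter ℝ)) : Set (Ultrafilter ℝ) :=
  ⋃₀ {L | IsMinimalLeftIdealIn T L}

/-- `A` is thick near zero (as a subset of `S`). -/
def ThickNearZero (S A : Set ℝ) : Prop :=
  ∃ ε > (0 : ℝ), ∀ F : Finset ℝ, F.Nonempty → ↑F ⊆ Ioo (0 : ℝ) ε ∩ S →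
    ∀ δ > (0 : ℝ), ∃ y ∈ Ioo (0 : ℝ) δ ∩ S, ∀ x ∈ F, x + y ∈ A

/-- `A` is syndetic near zero (as a subset of `S`). -/
def SyndeticNearZero (S A : Set ℝ) : Prop :=
  ∀ ε > (0 : ℝ), ∃ F : Finset ℝ, F.Nonempty ∧ ↑F ⊆ Ioo (0 : ℝ) ε ∩ S ∧
    ∃ δ > (0 : ℝ), ∀ x ∈ Ioo (0 : ℝ) δ ∩ S, ∃ t ∈ F, t + x ∈ A

/-- `A` is piecewise syndetic near zero (as a subset of `S`). -/
def PiecewiseSyndeticNearZero (S A : Set ℝ) : Prop :=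
  ∀ δ > (0 : ℝ), ∃ F : Finset ℝ, F.Nonempty ∧ ↑F ⊆ Ioo (0 : ℝ) δ ∩ S ∧
    ThickNearZero S {y | y ∈ S ∧ ∃ t ∈ F, t + y ∈ A}

/-- `T_0`: sequences in `S` with infimum `0`. -/
def T0 (S : Set ℝ) : Set (ℕ → ℝ) :=
  {f | (∀ n, f n ∈ S) ∧ IsGLB (range f) 0}

/-- `A` is a `J`-set near zero (as a subset of `S`). -/
def JSetNearZero (S A : Set ℝ) : Prop :=
  ∀ F : Finset (ℕ → ℝ), F.Nonempty → ↑F ⊆ T0 S → ∀ δ > (0 : ℝ),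
    ∃ a ∈ S ∩ Ioo (0 : ℝ) δ, ∃ H : Finset ℕ, H.Nonempty ∧
      ∀ f ∈ F, a + ∑ t ∈ H, f t ∈ A

/-- `J_0(S)`: the members of `0⁺(S)` all of whose members are `J`-sets near zero. -/
def J0 (S : Set ℝ) : Set (Ultrafilter ℝ) :=
  {p | p ∈ zeroPlus S ∧ ∀ A : Set ℝ, A ⊆ S → A ∈ p → JSetNearZero S A}

/-- `A` is central near zero: it belongs to some idempotent in `K(0⁺(S))`. -/
def CentralNearZero (S A : Set ℝ) : Prop :=
  ∃ p : Ultrafilter ℝ, p + p = p ∧ p ∈ smallestIdeal (zeroPlus S) ∧ A ∈ p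

/-- `A` is a `C`-set near zero (it satisfies the conclusion of the Central Sets
    Theorem near zero). -/
def CSetNearZero (S A : Set ℝ) : Prop :=
  ∀ δ ∈ Ioo (0 : ℝ) 1,
    ∃ (α : Finset (ℕ → ℝ) → ℝ) (H : Finset (ℕ → ℝ) → Finset ℕ),
      (∀ F : Finset (ℕ → ℝ), F.Nonempty → ↑F ⊆ T0 S →
        α F ∈ S ∧ α F < δ ∧ (H F).Nonempty) ∧
      (∀ F G : Finset (ℕ → ℝ), F.Nonempty → ↑F ⊆ T0 S → G.Nonempty → ↑G ⊆ T0 S →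
        F ⊂ G → ∀ i ∈ H F, ∀ j ∈ H G, i < j) ∧
      (∀ m : ℕ, ∀ G : Fin (m + 1) → Finset (ℕ → ℝ), ∀ f : Fin (m + 1) → ℕ → ℝ,
        (∀ i, (G i).Nonempty) → (∀ i, ↑(G i) ⊆ T0 S) →
        (∀ i j, i < j → G i ⊂ G j) → (∀ i, f i ∈ G i) →
        ∑ i, (α (G i) + ∑ t ∈ H (G i), f i t) ∈ A)

open Topology

section aux

lemma uadd_assoc (p q r : Ultrafilter ℝ) : p + q + r = p + (q + r) := by
  have h := @add_assoc (Ultrafilter ℝ) Ultrafilter.addSemigroup p q r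
  exact h

lemma ucont (q : Ultrafilter ℝ) : Continuous (fun p : Ultrafilter ℝ => p + q) := by
  have h := @Ultrafilter.continuous_add_left ℝ _ q
  exact h

lemma umem_of_superset {u : Ultrafilter ℝ} {A B : Set ℝ} (h : A ∈ u) (hAB : A ⊆ B) : B ∈ u :=
  Ultrafilter.mem_coe.1 (Filter.mem_of_superset (Ultrafilter.mem_coe.2 h) hAB)

lemma uinter_mem {u : Ultrafilter ℝ} {A B : Set ℝ} (h1 : A ∈ u) (h2 : B ∈ u) : A ∩ B ∈ u :=
  Ultrafilter.mem_coe.1 (Filter.inter_mem (Ultrafilter.mem_coe.2 h1) (Ultrafilter.mem_coe.2 h2))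

lemma mem_uadd {p q : Ultrafilter ℝ} {A : Set ℝ} :
    A ∈ p + q ↔ {x : ℝ | {y : ℝ | x + y ∈ A} ∈ q} ∈ p := by
  have := Ultrafilter.eventually_add p q (· ∈ A)
  simpa [Filter.eventually_iff] using this

end aux

section ideals
variable {T : Set (Ultrafilter ℝ)}

lemma minimal_translate (hT : ∀ p ∈ T, ∀ q ∈ T, p + q ∈ T)
    {L : Set (Ultrafilter ℝ)} (hL : IsMinimalLeftIdealIn T L)
    {t : Ultrafilter ℝ} (ht : t ∈ T) : IsMinimalLeftIdealIn T ((· + t) '' L) := by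
  obtain ⟨⟨hLne, hLsub, hLadd⟩, hLmin⟩ := hL
  have hidl : IsLeftIdealIn T ((· + t) '' L) := by
    refine ⟨hLne.image _, ?_, ?_⟩
    · rintro _ ⟨x, hx, rfl⟩; exact hT x (hLsub hx) t ht
    · rintro p hp _ ⟨x, hx, rfl⟩
      refine ⟨p + x, hLadd p hp x hx, ?_⟩
      show p + x + t = p + (x + t)
      exact uadd_assoc p x t
  refine ⟨hidl, fun L' hL' hsub => ?_⟩
  obtain ⟨hL'ne, hL'sub, hL'add⟩ := hL'
  set B := {y ∈ L | y + t ∈ L'} with hB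
  have hBidl : IsLeftIdealIn T B := by
    obtain ⟨a, ha⟩ := hL'ne
    obtain ⟨x, hx, rfl⟩ := hsub ha
    refine ⟨⟨x, hx, ha⟩, fun y hy => hLsub hy.1, ?_⟩
    rintro p hp y ⟨hyL, hyL'⟩
    refine ⟨hLadd p hp y hyL, ?_⟩
    show p + y + t ∈ L'
    rw [uadd_assoc]
    exact hL'add p hp _ hyL'
  have hBL : B = L := hLmin B hBidl (fun y hy => hy.1)
  apply Set.Subset.antisymm hsub
  rintro _ ⟨x, hx, rfl⟩
  rw [← hBL] at hx; exact hx.2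

lemma exists_eq_add_add (hT : ∀ p ∈ T, ∀ q ∈ T, p + q ∈ T)
    {L : Set (Ultrafilter ℝ)} (hL : IsMinimalLeftIdealIn T L)
    {p r : Ultrafilter ℝ} (hpL : p ∈ L) (hr : r ∈ T) :
    ∃ q ∈ T, p = q + r + p := by
  obtain ⟨⟨hLne, hLsub, hLadd⟩, hLmin⟩ := hL
  have hrp : r + p ∈ L := hLadd r hr p hpL
  have hidl : IsLeftIdealIn T ((· + (r + p)) '' T) := by
    refine ⟨⟨r + (r + p), r, hr, rfl⟩, ?_, ?_⟩
    · rintro _ ⟨x, hx, rfl⟩; exact hT x hx _ (hLsub hrp)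
    · rintro a ha _ ⟨x, hx, rfl⟩
      refine ⟨a + x, hT a ha x hx, ?_⟩
      show a + x + (r + p) = a + (x + (r + p))
      exact uadd_assoc a x (r + p)
  have hsub : ((· + (r + p)) '' T) ⊆ L := by
    rintro _ ⟨x, hx, rfl⟩; exact hLadd x hx _ hrp
  have heq := hLmin _ hidl hsub
  rw [← heq] at hpL
  obtain ⟨q, hq, hqe⟩ := hpL
  refine ⟨q, hq, ?_⟩
  rw [uadd_assoc]
  exact hqe.symm

end ideals

/-- Every closed nonempty subsemigroup of `βℝ` contains a minimal left ideal. -/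
lemma exists_minimal_leftIdeal {T : Set (Ultrafilter ℝ)}
    (hT : ∀ p ∈ T, ∀ q ∈ T, p + q ∈ T) (hTc : IsClosed T) (hTne : T.Nonempty) :
    ∃ L, IsMinimalLeftIdealIn T L := by
  classical
  set 𝓕 : Set (Set (Ultrafilter ℝ)) := {L | ∃ q ∈ T, L = (· + q) '' T} with h𝓕
  have hTcpt : IsCompact T := hTc.isCompact
  have himg_cpt : ∀ q : Ultrafilter ℝ, IsCompact ((· + q) '' T) := fun q =>
    hTcpt.image (ucont q)
  have himg_sub : ∀ q ∈ T, (· + q) '' T ⊆ T := by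
    rintro q hq _ ⟨x, hx, rfl⟩; exact hT x hx q hq
  have himg_idl : ∀ q ∈ T, IsLeftIdealIn T ((· + q) '' T) := by
    intro q hq
    refine ⟨hTne.image _, himg_sub q hq, ?_⟩
    rintro p hp _ ⟨x, hx, rfl⟩
    refine ⟨p + x, hT p hp x hx, ?_⟩
    show p + x + q = p + (x + q)
    exact uadd_assoc p x q
  -- Zorn
  obtain ⟨q₀, hq₀⟩ := hTne
  have hcond : ∀ c ⊆ 𝓕, IsChain (· ⊆ ·) c → c.Nonempty → ∃ lb ∈ 𝓕, ∀ s ∈ c, lb ⊆ s := by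
    intro c hc hchain hcne
    -- the chain has nonempty compact closed members; its intersection is nonempty
    have hne : (⋂₀ c).Nonempty := by
      have : Nonempty c := hcne.to_subtype
      have hdir : Directed (· ⊇ ·) (fun s : c => (s : Set (Ultrafilter ℝ))) := by
        intro a b
        rcases hchain.total a.2 b.2 with h | h
        · exact ⟨a, le_refl _, h⟩
        · exact ⟨b, h, le_refl _⟩
      have := IsCompact.nonempty_iInter_of_directed_nonempty_isCompact_isClosed
        (fun s : c => (s : Set (Ultrafilter ℝ))) hdir
        (fun s => ?_) (fun s => ?_) (fun s => ?_)
      · rwa [sInter_eq_iInter]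
      · obtain ⟨q, hq, he⟩ := hc s.2; rw [he]; exact ⟨_, q₀, hq₀, rfl⟩
      · obtain ⟨q, hq, he⟩ := hc s.2; rw [he]; exact himg_cpt q
      · obtain ⟨q, hq, he⟩ := hc s.2; rw [he]; exact (himg_cpt q).isClosed
    obtain ⟨q', hq'⟩ := hne
    have hq'T : q' ∈ T := by
      obtain ⟨s, hs⟩ := hcne
      obtain ⟨q, hq, he⟩ := hc hs
      exact himg_sub q hq (he ▸ (mem_sInter.1 hq' _ hs))
    refine ⟨(· + q') '' T, ⟨q', hq'T, rfl⟩, ?_⟩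
    intro s hs
    obtain ⟨q, hq, rfl⟩ := hc hs
    have hq'' : q' ∈ (· + q) '' T := mem_sInter.1 hq' _ hs
    obtain ⟨t, ht, rfl⟩ := hq''
    rintro _ ⟨x, hx, rfl⟩
    refine ⟨x + t, hT x hx t ht, ?_⟩
    show x + t + q = x + (t + q)
    exact uadd_assoc x t q
  obtain ⟨m, -, hm⟩ := zorn_superset_nonempty 𝓕 hcond _ ⟨q₀, hq₀, rfl⟩
  have hm𝓕 : m ∈ 𝓕 := hm.1
  have hmmin : ∀ L ∈ 𝓕, L ⊆ m → L = m := fun L hL hsub => hsub.antisymm (hm.2 hL hsub)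
  obtain ⟨q, hq, rfl⟩ := hm𝓕
  refine ⟨_, himg_idl q hq, ?_⟩
  intro L' hL' hsub
  obtain ⟨⟨hL'ne, hL'sub, hL'add⟩, -⟩ := And.intro hL' trivial
  obtain ⟨s, hs⟩ := hL'ne
  have hTs : (· + s) '' T ⊆ L' := by
    rintro _ ⟨x, hx, rfl⟩; exact hL'add x hx s hs
  have : (· + s) '' T = (· + q) '' T :=
    hmmin _ ⟨s, hL'sub hs, rfl⟩ (hTs.trans hsub)
  exact hsub.antisymm (this ▸ hTs)

variable {S : Set ℝ}

lemma Ioo_inter_nonempty (hS : DenseSubsemigroupPos S) {ε : ℝ} (hε : 0 < ε) :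
    (Ioo (0:ℝ) ε ∩ S).Nonempty := by
  have h2 : ε / 2 ∈ closure S := hS.2.2 (half_pos hε)
  rcases mem_closure_iff.1 h2 (Ioo (0:ℝ) ε) isOpen_Ioo ⟨half_pos hε, by linarith⟩ with ⟨x, hx1, hx2⟩
  exact ⟨x, hx1, hx2⟩

lemma mem_of_zeroPlus {p : Ultrafilter ℝ} (hp : p ∈ zeroPlus S) : S ∈ p := by
  have := hp 1 one_pos
  exact Ultrafilter.mem_coe.1 (Filter.mem_of_superset this inter_subset_right)

lemma zeroPlus_isClosed : IsClosed (zeroPlus S) := by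
  have : zeroPlus S = ⋂ ε ∈ Ioi (0:ℝ), {p : Ultrafilter ℝ | Ioo (0:ℝ) ε ∩ S ∈ p} := by
    ext p; simp [zeroPlus, mem_Ioi]
  rw [this]
  exact isClosed_biInter fun ε _ => ultrafilter_isClosed_basic _

lemma zeroPlus_nonempty (hS : DenseSubsemigroupPos S) : (zeroPlus S).Nonempty := by
  have h0 : (0:ℝ) ∈ closure S := by
    have h1 : closure (Ioi (0:ℝ)) ⊆ closure S := by
      rw [← closure_closure (s := S)]; exact closure_mono hS.2.2
    exact h1 (by rw [closure_Ioi]; exact self_mem_Ici)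
  have : (𝓝[S] (0:ℝ)).NeBot := mem_closure_iff_nhdsWithin_neBot.1 h0
  obtain ⟨u, hu⟩ := Ultrafilter.exists_le (𝓝[S] (0:ℝ))
  refine ⟨u, fun ε hε => ?_⟩
  have hmem : Ioo (0:ℝ) ε ∩ S ∈ 𝓝[S] (0:ℝ) := by
    rw [mem_nhdsWithin]
    refine ⟨Ioo (-ε) ε, isOpen_Ioo, ⟨by linarith, hε⟩, ?_⟩
    rintro x ⟨⟨hx1, hx2⟩, hxS⟩
    exact ⟨⟨hS.1 x hxS, hx2⟩, hxS⟩
  exact hu hmem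

lemma zeroPlus_add (hS : DenseSubsemigroupPos S) {p q : Ultrafilter ℝ}
    (hp : p ∈ zeroPlus S) (hq : q ∈ zeroPlus S) : p + q ∈ zeroPlus S := by
  intro ε hε
  have key : Ioo (0:ℝ) (ε/2) ∩ S ⊆ {x : ℝ | {y : ℝ | x + y ∈ Ioo (0:ℝ) ε ∩ S} ∈ q} := by
    rintro x ⟨⟨hx0, hxe⟩, hxS⟩
    have : Ioo (0:ℝ) (ε/2) ∩ S ⊆ {y : ℝ | x + y ∈ Ioo (0:ℝ) ε ∩ S} := by
      rintro y ⟨⟨hy0, hye⟩, hyS⟩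
      exact ⟨⟨by linarith, by linarith⟩, hS.2.1 x hxS y hyS⟩
    exact Ultrafilter.mem_coe.1 (Filter.mem_of_superset (hq (ε/2) (half_pos hε)) this)
  have h1 : {x : ℝ | {y : ℝ | x + y ∈ Ioo (0:ℝ) ε ∩ S} ∈ q} ∈ p :=
    Ultrafilter.mem_coe.1 (Filter.mem_of_superset (hp (ε/2) (half_pos hε)) key)
  have := Ultrafilter.eventually_add p q (· ∈ Ioo (0:ℝ) ε ∩ S)
  rw [show (Ioo (0:ℝ) ε ∩ S ∈ p + q) ↔ _ from (by
    have := Ultrafilter.eventually_add p q (· ∈ Ioo (0:ℝ) ε ∩ S)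
    exact mem_uadd)]
  exact h1

lemma exists_zeroPlus_ultrafilter (hS : DenseSubsemigroupPos S) (𝒢 : Set (Set ℝ))
    (h : ∀ t ⊆ 𝒢, t.Finite → ∀ δ > (0:ℝ), (Ioo 0 δ ∩ S ∩ ⋂₀ t).Nonempty) :
    ∃ u : Ultrafilter ℝ, u ∈ zeroPlus S ∧ ∀ A ∈ 𝒢, A ∈ u := by
  set G := 𝒢 ∪ {B | ∃ δ > (0:ℝ), B = Ioo 0 δ ∩ S} with hG
  have key : ∀ t : Set (Set ℝ), t.Finite → t ⊆ G →
      ∃ δ > (0:ℝ), ∃ t' ⊆ 𝒢, t'.Finite ∧ Ioo 0 δ ∩ S ∩ ⋂₀ t' ⊆ ⋂₀ t := by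
    intro t htf
    refine Set.Finite.induction_on _ htf (fun _ => ⟨1, one_pos, ∅, by simp, finite_empty, by simp⟩) ?_
    clear htf t
    intro A t hAt htf ih hsub
    obtain ⟨δ, hδ, t', ht'sub, ht'fin, hkey⟩ :=
      ih (fun B hB => hsub (Set.mem_insert_of_mem _ hB))
    rcases hsub (Set.mem_insert _ _) with hA | hA
    · refine ⟨δ, hδ, insert A t', insert_subset hA ht'sub, ht'fin.insert _, ?_⟩
      rw [sInter_insert, sInter_insert]
      rintro x ⟨hx1, hx2, hx3⟩
      exact ⟨hx2, hkey ⟨hx1, hx3⟩⟩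
    · obtain ⟨δ', hδ', rfl⟩ := hA
      refine ⟨min δ δ', lt_min hδ hδ', t', ht'sub, ht'fin, ?_⟩
      rw [sInter_insert]
      rintro x ⟨⟨⟨hx0, hxm⟩, hxS⟩, hx3⟩
      exact ⟨⟨⟨hx0, lt_of_lt_of_le hxm (min_le_right _ _)⟩, hxS⟩,
        hkey ⟨⟨⟨hx0, lt_of_lt_of_le hxm (min_le_left _ _)⟩, hxS⟩, hx3⟩⟩
  have hne : (Filter.generate G).NeBot := by
    rw [Filter.generate_neBot_iff]
    intro t hts htfin
    obtain ⟨δ, hδ, t', ht'g, ht'f, hsub2⟩ := key t htfin hts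
    obtain ⟨x, hx⟩ := h t' ht'g ht'f δ hδ
    exact ⟨x, hsub2 hx⟩
  obtain ⟨u, hu⟩ := Ultrafilter.exists_le (Filter.generate G)
  refine ⟨u, fun ε hε => ?_, fun A hA => ?_⟩
  · exact Ultrafilter.mem_coe.1 (hu (Filter.mem_generate_of_mem (Or.inr ⟨ε, hε, rfl⟩)))
  · exact Ultrafilter.mem_coe.1 (hu (Filter.mem_generate_of_mem (Or.inl hA)))

/-- characterizations of members of the smallest ideal of `0⁺(S)`. -/
theorem mem_smallestIdeal_zeroPlus_iff (S : Set ℝ) (hS : DenseSubsemigroupPos S)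
    (p : Ultrafilter ℝ) (hp : p ∈ zeroPlus S) :
    (p ∈ smallestIdeal (zeroPlus S) ↔
      ∀ A : Set ℝ, A ⊆ S → A ∈ p →
        SyndeticNearZero S {x | x ∈ S ∧ {y | y ∈ S ∧ x + y ∈ A} ∈ p}) ∧
    (p ∈ smallestIdeal (zeroPlus S) ↔
      ∀ r ∈ zeroPlus S, ∃ q ∈ zeroPlus S, p = q + r + p) := by
  have hT : ∀ a ∈ zeroPlus S, ∀ b ∈ zeroPlus S, a + b ∈ zeroPlus S :=
    fun a ha b hb => zeroPlus_add hS ha hb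
  -- (a) → (c)
  have hac : p ∈ smallestIdeal (zeroPlus S) →
      ∀ r ∈ zeroPlus S, ∃ q ∈ zeroPlus S, p = q + r + p := by
    rintro ⟨L, hL, hpL⟩ r hr
    exact exists_eq_add_add hT hL hpL hr
  -- (c) → (a)
  have hca : (∀ r ∈ zeroPlus S, ∃ q ∈ zeroPlus S, p = q + r + p) →
      p ∈ smallestIdeal (zeroPlus S) := by
    intro h
    obtain ⟨L₀, hL₀⟩ := exists_minimal_leftIdeal hT zeroPlus_isClosed (zeroPlus_nonempty hS)
    obtain ⟨r, hrL⟩ := hL₀.1.1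
    obtain ⟨q, hq, hqe⟩ := h r (hL₀.1.2.1 hrL)
    refine ⟨(· + p) '' L₀, minimal_translate hT hL₀ hp, ⟨q + r, hL₀.1.2.2 q hq r hrL, ?_⟩⟩
    show q + r + p = p
    exact hqe.symm
  -- (a) → (b)
  have hab : p ∈ smallestIdeal (zeroPlus S) →
      ∀ A : Set ℝ, A ⊆ S → A ∈ p →
        SyndeticNearZero S {x | x ∈ S ∧ {y | y ∈ S ∧ x + y ∈ A} ∈ p} := by
    intro ha A hAS hAp
    set B := {x | x ∈ S ∧ {y | y ∈ S ∧ x + y ∈ A} ∈ p} with hBdef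
    by_contra hsyn
    rw [SyndeticNearZero] at hsyn
    push_neg at hsyn
    obtain ⟨ε, hε, hneg⟩ := hsyn
    set 𝒢 : Set (Set ℝ) := (fun a => {x | x ∈ S ∧ a + x ∉ B}) '' (Ioo 0 ε ∩ S) with h𝒢
    have hcond : ∀ t ⊆ 𝒢, t.Finite → ∀ δ > (0:ℝ), (Ioo 0 δ ∩ S ∩ ⋂₀ t).Nonempty := by
      intro t hts htf δ hδ
      have key2 : ∀ t : Set (Set ℝ), t.Finite → t ⊆ 𝒢 → ∃ F : Finset ℝ,
          ↑F ⊆ Ioo (0:ℝ) ε ∩ S ∧ ∀ x ∈ S, (∀ a ∈ F, a + x ∉ B) → x ∈ ⋂₀ t := by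
        intro t htf2
        refine Set.Finite.induction_on _ htf2
          (fun _ => ⟨∅, by simp, fun x _ _ => by simp⟩) ?_
        clear htf2 t
        intro C t hCt htf2 ih hsub
        obtain ⟨F, hFsub, hFkey⟩ := ih (fun B hB => hsub (Set.mem_insert_of_mem _ hB))
        obtain ⟨a, haI, rfl⟩ := hsub (Set.mem_insert _ _)
        refine ⟨insert a F, ?_, ?_⟩
        · rw [Finset.coe_insert]
          exact Set.insert_subset haI hFsub
        · intro x hxS hall
          rw [sInter_insert]
          refine ⟨⟨hxS, hall a (Finset.mem_insert_self _ _)⟩, ?_⟩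
          exact hFkey x hxS fun b hb => hall b (Finset.mem_insert_of_mem hb)
      obtain ⟨F, hFsub, hFkey⟩ := key2 t htf hts
      by_cases hFne : F.Nonempty
      · obtain ⟨x, hx, hxall⟩ := hneg F hFne hFsub δ hδ
        exact ⟨x, hx, hFkey x hx.2 hxall⟩
      · obtain ⟨x, hx⟩ := Ioo_inter_nonempty hS hδ
        exact ⟨x, hx, hFkey x hx.2 fun a ha' => absurd ⟨a, ha'⟩ hFne⟩
    obtain ⟨r, hr, hrmem⟩ := exists_zeroPlus_ultrafilter hS 𝒢 hcond
    obtain ⟨L, hL, hpL⟩ := ha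
    obtain ⟨q, hq, hqe⟩ := exists_eq_add_add hT hL hpL hr
    have h1 : {x : ℝ | {y : ℝ | x + y ∈ A} ∈ r + p} ∈ q := by
      apply mem_uadd.1
      rw [← uadd_assoc, ← hqe]
      exact hAp
    obtain ⟨x, hxmem⟩ :=
      Ultrafilter.nonempty_of_mem (Ultrafilter.mem_coe.2 (uinter_mem (hq ε hε) h1))
    obtain ⟨⟨hxIoo, hxS'⟩, hx1⟩ := hxmem
    have h3 : {y : ℝ | {z : ℝ | x + (y + z) ∈ A} ∈ p} ∈ r := mem_uadd.1 hx1
    have h4 : {y | y ∈ S ∧ x + y ∉ B} ∈ r := hrmem _ ⟨x, ⟨hxIoo, hxS'⟩, rfl⟩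
    obtain ⟨y, hymem⟩ :=
      Ultrafilter.nonempty_of_mem (Ultrafilter.mem_coe.2 (uinter_mem h4 h3))
    obtain ⟨⟨hyS, hyB⟩, hy3⟩ := hymem
    apply hyB
    refine ⟨hS.2.1 x hxS' y hyS, ?_⟩
    have h5 : {z : ℝ | (x + y) + z ∈ A} ∈ p := by
      have he : {z : ℝ | x + (y + z) ∈ A} = {z : ℝ | (x + y) + z ∈ A} := by
        ext z; simp [add_assoc]
      rw [← he]; exact hy3
    have h6 : {z | z ∈ S ∧ (x + y) + z ∈ A} = S ∩ {z : ℝ | (x + y) + z ∈ A} := rfl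
    exact umem_of_superset (uinter_mem (mem_of_zeroPlus hp) h5) (by rw [h6])
  -- (b) → (c)
  have hbc : (∀ A : Set ℝ, A ⊆ S → A ∈ p →
        SyndeticNearZero S {x | x ∈ S ∧ {y | y ∈ S ∧ x + y ∈ A} ∈ p}) →
      ∀ r ∈ zeroPlus S, ∃ q ∈ zeroPlus S, p = q + r + p := by
    intro hb r hr
    set D : Set ℝ → Set ℝ := fun A => {x : ℝ | {y : ℝ | x + y ∈ A} ∈ r + p} with hD
    have hDmono : ∀ A A' : Set ℝ, A ⊆ A' → D A ⊆ D A' := by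
      intro A A' hAA x hx
      have hx' : {y : ℝ | x + y ∈ A} ∈ r + p := hx
      show {y : ℝ | x + y ∈ A'} ∈ r + p
      exact umem_of_superset hx' fun y hy => hAA hy
    have hDmain : ∀ A ∈ p, ∀ δ > (0:ℝ), ∃ x ∈ Ioo (0:ℝ) δ ∩ S, x ∈ D A := by
      intro A hA δ hδ
      have hA' : A ∩ S ∈ p := uinter_mem hA (mem_of_zeroPlus hp)
      set B := {x | x ∈ S ∧ {y | y ∈ S ∧ x + y ∈ A ∩ S} ∈ p} with hB
      obtain ⟨F, hFne, hFsub, δ', hδ', hcov⟩ := hb (A ∩ S) inter_subset_right hA' δ hδ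
      have hU : (⋃ a ∈ (F : Set ℝ), (Ioo (0:ℝ) δ' ∩ S ∩ {x | a + x ∈ B})) ∈ r := by
        refine umem_of_superset (hr δ' hδ') ?_
        intro x hx
        obtain ⟨t, htF, htB⟩ := hcov x hx
        exact Set.mem_biUnion htF ⟨hx, htB⟩
      obtain ⟨a, haF, haMem⟩ := (Ultrafilter.finite_biUnion_mem_iff F.finite_toSet).1 hU
      refine ⟨a, hFsub haF, ?_⟩
      apply mem_uadd.2
      refine umem_of_superset haMem ?_
      rintro y ⟨-, hyB⟩
      show {z : ℝ | y + z ∈ {w : ℝ | a + w ∈ A}} ∈ p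
      refine umem_of_superset hyB.2 ?_
      rintro z ⟨hzS, hzA⟩
      show a + (y + z) ∈ A
      rw [← add_assoc]
      exact hzA.1
    have hcond : ∀ t ⊆ D '' {A : Set ℝ | A ∈ p}, t.Finite → ∀ δ > (0:ℝ),
        (Ioo (0:ℝ) δ ∩ S ∩ ⋂₀ t).Nonempty := by
      intro t hts htf δ hδ
      have key3 : ∀ t : Set (Set ℝ), t.Finite → t ⊆ D '' {A : Set ℝ | A ∈ p} →
          ∃ A : Set ℝ, A ∈ p ∧ D A ⊆ ⋂₀ t := by
        intro t htf2
        refine Set.Finite.induction_on _ htf2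
          (fun _ => ⟨Set.univ, Filter.univ_mem, by simp⟩) ?_
        clear htf2 t
        intro C t hCt htf2 ih hsub
        obtain ⟨A, hA, hkey⟩ := ih fun B hB => hsub (Set.mem_insert_of_mem _ hB)
        obtain ⟨A₀, hA₀, rfl⟩ := hsub (Set.mem_insert _ _)
        refine ⟨A ∩ A₀, uinter_mem hA hA₀, ?_⟩
        intro x hx
        rw [sInter_insert]
        exact ⟨hDmono _ A₀ inter_subset_right hx,
          hkey (hDmono _ A inter_subset_left hx)⟩
      obtain ⟨A, hA, hkey⟩ := key3 t htf hts
      obtain ⟨x, hxI, hxD⟩ := hDmain A hA δ hδ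
      exact ⟨x, hxI, hkey hxD⟩
    obtain ⟨q, hq, hqmem⟩ := exists_zeroPlus_ultrafilter hS _ hcond
    refine ⟨q, hq, ?_⟩
    have heq : q + (r + p) = p := by
      apply Ultrafilter.eq_of_le
      intro A hA
      exact Ultrafilter.mem_coe.2 (mem_uadd.2 (hqmem _ ⟨A, hA, rfl⟩))
    rw [uadd_assoc]
    exact heq.symm
  exact ⟨⟨fun ha => hab ha, fun hb => hca (hbc hb)⟩, ⟨hac, hca⟩⟩
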